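/- Let f_0,…,f_m ∈ k[x_0,…,x_n] be forms of the same degree satisfying the canonical restrictions (gcd equal to 1 and every variable appearing in some f_j). Then the Newton complementary dual forms f̂_0,…,f̂_m also satisfy the canonical restrictions, and the Newton complementary dual of (f̂_0,…,f̂_m) equals (f_0,…,f_m). -/

import Mathlib

open MvPolynomial

/-- The directrix vector of a tuple of polynomials: `α_i` is the maximum exponent of `x_i`
over all monomials occurring in any of the polynomials. -/
noncomputable def alphaVec {k : Type*} [Field k] {n m : ℕ}
    (f : Fin m → MvPolynomial (Fin n) k) (i : Fin n) : ℕ :=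
  Finset.univ.sup fun j => (f j).support.sup fun s => s i

/-- The Newton complementary dual of a form with respect to a vector `α`: replace each
monomial `x^s` (keeping its coefficient) by `x^{α−s}`. -/
noncomputable def dualForm {k : Type*} [Field k] {n : ℕ} (α : Fin n → ℕ)
    (f : MvPolynomial (Fin n) k) : MvPolynomial (Fin n) k :=
  ∑ s ∈ f.support, monomial (Finsupp.equivFunOnFinite.symm fun i => α i - s i) (f.coeff s)

/-- The Newton complementary dual of a tuple of forms. -/
noncomputable def dualTuple {k : Type*} [Field k] {n m : ℕ}
    (f : Fin m → MvPolynomial (Fin n) k) : Fin m → MvPolynomial (Fin n) k :=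
  fun j => dualForm (alphaVec f) (f j)

section Helpers

variable {k : Type*} [Field k] {N : ℕ}

/-- Auxiliary: the exponent flip `s ↦ α − s`. -/
noncomputable def NewtonDual.eFlip (α : Fin N → ℕ) (s : Fin N →₀ ℕ) : Fin N →₀ ℕ :=
  Finsupp.equivFunOnFinite.symm fun i => α i - s i

namespace NewtonDual

@[simp] lemma eFlip_apply (α : Fin N → ℕ) (s : Fin N →₀ ℕ) (i : Fin N) :
    eFlip α s i = α i - s i := rfl

lemma eFlip_eFlip {α : Fin N → ℕ} {s : Fin N →₀ ℕ} (h : ∀ i, s i ≤ α i) :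
    eFlip α (eFlip α s) = s := by
  ext i; simp; exact Nat.sub_sub_self (h i)

lemma eFlip_inj {α : Fin N → ℕ} {s t : Fin N →₀ ℕ} (hs : ∀ i, s i ≤ α i)
    (ht : ∀ i, t i ≤ α i) (h : eFlip α s = eFlip α t) : s = t := by
  rw [← eFlip_eFlip hs, h, eFlip_eFlip ht]

lemma dualForm_eq_sum (α : Fin N → ℕ) (f : MvPolynomial (Fin N) k) :
    dualForm α f = ∑ s ∈ f.support, monomial (eFlip α s) (f.coeff s) := rfl

/-- Bound hypothesis: all exponents of `f` are dominated by `α`. -/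
def Bnd (α : Fin N → ℕ) (f : MvPolynomial (Fin N) k) : Prop :=
  ∀ s ∈ f.support, ∀ i, s i ≤ α i

lemma coeff_dualForm {α : Fin N → ℕ} {f : MvPolynomial (Fin N) k} (hb : Bnd α f)
    {s : Fin N →₀ ℕ} (hs : s ∈ f.support) :
    coeff (eFlip α s) (dualForm α f) = coeff s f := by
  rw [dualForm_eq_sum, coeff_sum, Finset.sum_eq_single s]
  · simp [coeff_monomial]
  · intro t ht hts
    rw [coeff_monomial, if_neg]
    exact fun h => hts (eFlip_inj (hb t ht) (hb s hs) h)
  · exact fun h => absurd hs h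

lemma support_dualForm {α : Fin N → ℕ} {f : MvPolynomial (Fin N) k} (hb : Bnd α f) :
    (dualForm α f).support = f.support.image (eFlip α) := by
  ext t
  simp only [Finset.mem_image, mem_support_iff]
  constructor
  · intro ht
    by_contra hc
    push_neg at hc
    apply ht
    rw [dualForm_eq_sum, coeff_sum]
    apply Finset.sum_eq_zero
    intro s hs
    rw [coeff_monomial, if_neg]
    intro h
    exact hc s (mem_support_iff.mp hs) h
  · rintro ⟨s, hs, rfl⟩
    rw [coeff_dualForm hb (mem_support_iff.mpr hs)]
    exact hs

lemma dualForm_dualForm {α : Fin N → ℕ} {f : MvPolynomial (Fin N) k} (hb : Bnd α f) :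
    dualForm α (dualForm α f) = f := by
  rw [dualForm_eq_sum, support_dualForm hb, Finset.sum_image ?inj]
  case inj => exact fun s hs t ht h => eFlip_inj (hb s hs) (hb t ht) h
  calc ∑ s ∈ f.support, monomial (eFlip α (eFlip α s)) (coeff (eFlip α s) (dualForm α f))
      = ∑ s ∈ f.support, monomial s (coeff s f) :=
        Finset.sum_congr rfl fun s hs => by rw [coeff_dualForm hb hs, eFlip_eFlip (hb s hs)]
    _ = f := f.support_sum_monomial_coeff

end NewtonDual

open NewtonDual

/-! The fraction field and the inversion trick. -/

noncomputable abbrev NewtonDual.KK (k : Type*) [Field k] (N : ℕ) :=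
  FractionRing (MvPolynomial (Fin N) k)

noncomputable def NewtonDual.chi (k : Type*) [Field k] (N : ℕ) :
    MvPolynomial (Fin N) k →+* KK k N := algebraMap _ _

noncomputable def NewtonDual.phi (k : Type*) [Field k] (N : ℕ) :
    MvPolynomial (Fin N) k →+* KK k N :=
  eval₂Hom ((chi k N).comp C) fun i => (chi k N (X i))⁻¹

namespace NewtonDual

lemma chi_injective : Function.Injective (chi k N) := IsFractionRing.injective _ _

lemma chi_X_ne_zero (i : Fin N) : chi k N (X i) ≠ 0 := by
  intro h
  have := chi_injective (k := k) (N := N) (h.trans (map_zero (chi k N)).symm)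
  exact X_ne_zero i this

lemma phi_monomial (s : Fin N →₀ ℕ) (a : k) :
    phi k N (monomial s a) = chi k N (C a) * ∏ i, (chi k N (X i))⁻¹ ^ s i := by
  rw [phi, eval₂Hom_monomial, Finsupp.prod_fintype]
  · rfl
  · intro i; exact pow_zero _

lemma chi_monomial (s : Fin N →₀ ℕ) (a : k) :
    chi k N (monomial s a) = chi k N (C a) * ∏ i, (chi k N (X i)) ^ s i := by
  rw [monomial_eq, Finsupp.prod_fintype (h := fun i => pow_zero (X i))]
  rw [map_mul, map_prod]
  simp [map_pow]

lemma chi_dualForm {α : Fin N → ℕ} {f : MvPolynomial (Fin N) k} (hb : Bnd α f) :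
    chi k N (dualForm α f) = (∏ i, chi k N (X i) ^ α i) * phi k N f := by
  conv_rhs => rw [show f = ∑ s ∈ f.support, monomial s (coeff s f)
    from f.support_sum_monomial_coeff.symm]
  rw [dualForm_eq_sum, map_sum, map_sum, Finset.mul_sum]
  apply Finset.sum_congr rfl
  intro s hs
  rw [chi_monomial, phi_monomial]
  rw [mul_left_comm, ← Finset.prod_mul_distrib]
  congr 1
  apply Finset.prod_congr rfl
  intro i _
  rw [eFlip_apply, pow_sub₀ _ (chi_X_ne_zero i) (hb s hs i), inv_pow]

open Pointwise in
lemma Bnd.mul {α β : Fin N → ℕ} {p q : MvPolynomial (Fin N) k} (hp : Bnd α p) (hq : Bnd β q) :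
    Bnd (fun i => α i + β i) (p * q) := by
  classical
  intro s hs i
  obtain ⟨b, hb, c, hc, rfl⟩ := Finset.mem_add.mp (support_mul p q hs)
  exact Nat.add_le_add (hp b hb i) (hq c hc i)

lemma dualForm_mul {α β : Fin N → ℕ} {p q : MvPolynomial (Fin N) k}
    (hp : Bnd α p) (hq : Bnd β q) :
    dualForm (fun i => α i + β i) (p * q) = dualForm α p * dualForm β q := by
  apply chi_injective
  rw [map_mul, chi_dualForm (hp.mul hq), chi_dualForm hp, chi_dualForm hq, map_mul]
  simp only [pow_add, Finset.prod_mul_distrib]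
  ring

/-! Divisibility by the variables. -/

lemma X_dvd_iff' {i : Fin N} {f : MvPolynomial (Fin N) k} :
    X i ∣ f ↔ ∀ s ∈ f.support, s i ≠ 0 := by
  rw [X_dvd_iff_modMonomial_eq_zero]
  constructor
  · intro h s hs hsi
    have h1 : ¬ Finsupp.single i 1 ≤ s := by
      rw [Finsupp.single_le_iff, hsi]; omega
    have := coeff_modMonomial_of_not_le f h1
    rw [h] at this
    simp only [coeff_zero] at this
    exact mem_support_iff.mp hs this.symm
  · intro h
    ext t
    rw [coeff_zero]
    by_cases h1 : Finsupp.single i 1 ≤ t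
    · exact coeff_modMonomial_of_le f h1
    · rw [coeff_modMonomial_of_not_le f h1]
      by_contra hc
      apply h t (mem_support_iff.mpr hc)
      rw [Finsupp.single_le_iff] at h1
      omega

end NewtonDual

/-- Substitution killing the variable `X i`. -/
noncomputable def NewtonDual.psiK (i : Fin N) :
    MvPolynomial (Fin N) k →ₐ[k] MvPolynomial (Fin N) k :=
  aeval (fun j => if j = i then 0 else X j)

namespace NewtonDual

lemma psiK_eq_zero_iff {i : Fin N} {g : MvPolynomial (Fin N) k} :
    psiK i g = 0 ↔ X i ∣ g := by
  constructor
  · intro h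
    rw [X_dvd_iff_modMonomial_eq_zero]
    set r := g.modMonomial (Finsupp.single i 1) with hr
    have hdec := g.divMonomial_add_modMonomial_single i
    have hri : ∀ s ∈ r.support, s i = 0 := by
      intro s hs
      by_contra hsi
      have hle : Finsupp.single i 1 ≤ s := by
        rw [Finsupp.single_le_iff]; omega
      exact mem_support_iff.mp hs (coeff_modMonomial_of_le g hle)
    have hpsir : psiK i r = r := by
      conv_lhs => rw [show r = ∑ s ∈ r.support, monomial s (coeff s r)
        from r.support_sum_monomial_coeff.symm]
      rw [map_sum]
      conv_rhs => rw [show r = ∑ s ∈ r.support, monomial s (coeff s r)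
        from r.support_sum_monomial_coeff.symm]
      apply Finset.sum_congr rfl
      intro s hs
      rw [psiK, aeval_monomial, monomial_eq, algebraMap_eq]
      congr 1
      apply Finsupp.prod_congr
      intro j hj
      have hji : j ≠ i := by
        intro hje
        subst hje
        exact Finsupp.mem_support_iff.mp hj (hri s hs)
      rw [if_neg hji]
    have : psiK i g = psiK i r := by
      conv_lhs => rw [← hdec]
      rw [map_add, map_mul]
      simp [psiK]
      rfl
    rw [h, hpsir] at this
    exact this.symm
  · rintro ⟨h, rfl⟩
    rw [map_mul]
    simp [psiK]

lemma prime_X' (i : Fin N) : Prime (X i : MvPolynomial (Fin N) k) := by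
  refine ⟨X_ne_zero i, ?_, ?_⟩
  · intro hu
    have := hu.map (psiK (k := k) i)
    rw [show psiK (k := k) i (X i) = 0 by simp [psiK]] at this
    exact zero_ne_one (isUnit_zero_iff.mp this)
  · intro a b hab
    rw [← psiK_eq_zero_iff] at hab ⊢
    rw [← psiK_eq_zero_iff (g := b)]
    rw [map_mul] at hab
    exact mul_eq_zero.mp hab

lemma dvd_of_dvd_monomial_mul {p' g : MvPolynomial (Fin N) k} (e : Fin N → ℕ)
    (hx : ∀ i, ¬ X i ∣ p') (hdvd : p' ∣ (∏ i, X i ^ e i) * g) : p' ∣ g := by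
  have hrel : IsRelPrime p' (∏ i, X i ^ e i) := by
    apply IsRelPrime.prod_right
    intro i _
    apply IsRelPrime.pow_right
    exact (((prime_X' i).irreducible.isRelPrime_iff_not_dvd).mpr (hx i)).symm
  exact hrel.dvd_of_dvd_mul_left hdvd

/-! Units are constants. -/

lemma eq_C_of_support_subset {g : MvPolynomial (Fin N) k}
    (h : g.support ⊆ {0}) : g = C (coeff 0 g) := by
  ext t
  rw [coeff_C]
  split_ifs with ht
  · rw [← ht]
  · by_contra hc
    exact ht (Finset.mem_singleton.mp (h (mem_support_iff.mpr hc))).symm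

lemma eq_C_of_isUnit {g : MvPolynomial (Fin N) k} (h : IsUnit g) :
    g = C (coeff 0 g) := by
  obtain ⟨u, rfl⟩ := h
  set g : MvPolynomial (Fin N) k := (u : MvPolynomial (Fin N) k) with hg
  have huv : g * (↑u⁻¹ : MvPolynomial (Fin N) k) = 1 := u.mul_inv
  set v : MvPolynomial (Fin N) k := (↑u⁻¹ : MvPolynomial (Fin N) k)
  have hgne : g ≠ 0 := by
    intro h0; rw [h0, zero_mul] at huv; exact zero_ne_one huv
  have hvne : v ≠ 0 := by
    intro h0; rw [h0, mul_zero] at huv; exact zero_ne_one huv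
  set D : (Fin N →₀ ℕ) → Lex (Fin N →₀ ℕ) := ⇑toLex with hD
  have hDinj : Function.Injective D := toLex.injective
  have hadd : ∀ a b : Fin N →₀ ℕ, D (a + b) = D a + D b := fun a b => rfl
  have hlc : AddMonoidAlgebra.leadingCoeff D g * AddMonoidAlgebra.leadingCoeff D v ≠ 0 := by
    apply mul_ne_zero
    · rw [Ne, AddMonoidAlgebra.leadingCoeff_eq_zero hDinj]; exact hgne
    · rw [Ne, AddMonoidAlgebra.leadingCoeff_eq_zero hDinj]; exact hvne
  have hmul := AddMonoidAlgebra.supDegree_mul hDinj hadd hlc hgne hvne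
  rw [huv] at hmul
  have hone : AddMonoidAlgebra.supDegree D (1 : MvPolynomial (Fin N) k) = D 0 := by
    rw [AddMonoidAlgebra.one_def, AddMonoidAlgebra.supDegree_single, if_neg one_ne_zero]
  rw [hone] at hmul
  obtain ⟨a, ha, hae⟩ := AddMonoidAlgebra.exists_supDegree_mem_support D hgne
  obtain ⟨b, hb, hbe⟩ := AddMonoidAlgebra.exists_supDegree_mem_support D hvne
  rw [hae, hbe, ← hadd] at hmul
  have hab : a + b = 0 := (hDinj hmul).symm
  have ha0 : a = 0 := by
    ext i
    have := congrArg (fun t => t i) hab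
    simp only [Finsupp.add_apply, Finsupp.coe_zero, Pi.zero_apply] at this ⊢
    omega
  apply eq_C_of_support_subset
  intro s hs
  have h1 : D s ≤ AddMonoidAlgebra.supDegree D g := Finset.le_sup hs
  rw [hae, ha0] at h1
  have h2 : D 0 ≤ D s := Finsupp.toLex_monotone (zero_le : (0 : Fin N →₀ ℕ) ≤ s)
  exact Finset.mem_singleton.mpr (hDinj (le_antisymm h1 h2))

end NewtonDual

end Helpers
open NewtonDual in
/-- if forms `f_0,…,f_m` of the same degree satisfy the canonical restrictions
(`gcd` equal to `1`, and every variable appears in some `f_j`), then the Newton complementary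
dual forms also satisfy the canonical restrictions, and the dual of the dual tuple equals the
original tuple. -/
theorem dualTuple_involutive {k : Type*} [Field k] {n m d : ℕ}
    (f : Fin (m + 1) → MvPolynomial (Fin (n + 1)) k)
    (hne : ∀ j, f j ≠ 0)
    (hdeg : ∀ j, (f j).IsHomogeneous d)
    (hgcd : ∀ p : MvPolynomial (Fin (n + 1)) k, (∀ j, p ∣ f j) → IsUnit p)
    (hall : ∀ i, ∃ j, ∃ s ∈ (f j).support, s i ≠ 0) :
    (∀ p : MvPolynomial (Fin (n + 1)) k, (∀ j, p ∣ dualTuple f j) → IsUnit p) ∧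
    (∀ i, ∃ j, ∃ s ∈ (dualTuple f j).support, s i ≠ 0) ∧
    dualTuple (dualTuple f) = f := by
  classical
  set A : Fin (n + 1) → ℕ := alphaVec f with hA
  have hsupne : ∀ g : MvPolynomial (Fin (n + 1)) k, g ≠ 0 → g.support.Nonempty :=
    fun g hg => Finset.nonempty_iff_ne_empty.mpr fun h => hg (support_eq_empty.mp h)
  -- basic bound
  have hbnd : ∀ j, Bnd A (f j) := by
    intro j s hs i
    calc s i ≤ (f j).support.sup fun s => s i := Finset.le_sup (f := fun s => s i) hs
      _ ≤ A i := Finset.le_sup (f := fun j => (f j).support.sup fun s => s i)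
          (Finset.mem_univ j)
  have hdT : ∀ j, dualTuple f j = dualForm A (f j) := fun j => rfl
  have hsuppD : ∀ j, (dualTuple f j).support = (f j).support.image (eFlip A) := by
    intro j; rw [hdT j]; exact support_dualForm (hbnd j)
  have hbndD : ∀ j, Bnd A (dualTuple f j) := by
    intro j t ht i
    rw [hsuppD j] at ht
    obtain ⟨s, hs, rfl⟩ := Finset.mem_image.mp ht
    rw [eFlip_apply]
    omega
  have hDne : ∀ j, dualTuple f j ≠ 0 := by
    intro j h0
    apply hne j
    rw [← support_eq_empty, ← Finset.image_eq_empty (f := eFlip A), ← hsuppD j, h0,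
      support_zero]
  -- every variable misses some monomial of some f j (gcd condition)
  have hzero : ∀ i, ∃ j, ∃ s ∈ (f j).support, s i = 0 := by
    intro i
    by_contra hc
    push_neg at hc
    apply (prime_X' (k := k) i).not_unit
    apply hgcd
    intro j
    rw [X_dvd_iff']
    intro s hs
    exact hc j s hs
  -- the maximum A i is attained
  have hattain : ∀ i, ∃ j, ∃ s ∈ (f j).support, s i = A i := by
    intro i
    obtain ⟨j, _, hj⟩ := Finset.exists_mem_eq_sup Finset.univ Finset.univ_nonempty
      (fun j => (f j).support.sup fun s => s i)
    obtain ⟨s, hs, hse⟩ := Finset.exists_mem_eq_sup ((f j).support)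
      (hsupne _ (hne j)) (fun s => s i)
    exact ⟨j, s, hs, by rw [← hse, ← hj]; rfl⟩
  -- the alpha vector of the dual tuple is A
  have hAD : alphaVec (dualTuple f) = A := by
    funext i
    apply le_antisymm
    · apply Finset.sup_le
      intro j _
      apply Finset.sup_le
      intro t ht
      exact hbndD j t ht i
    · obtain ⟨j, s, hs, hsi⟩ := hzero i
      have htm : eFlip A s ∈ (dualTuple f j).support := by
        rw [hsuppD j]; exact Finset.mem_image_of_mem _ hs
      have h1 : A i = eFlip A s i := by rw [eFlip_apply, hsi]; omega
      calc A i = eFlip A s i := h1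
        _ ≤ (dualTuple f j).support.sup fun t => t i := Finset.le_sup (f := fun t => t i) htm
        _ ≤ alphaVec (dualTuple f) i :=
          Finset.le_sup (f := fun j => (dualTuple f j).support.sup fun t => t i)
            (Finset.mem_univ j)
  refine ⟨?_, ?_, ?_⟩
  · -- gcd condition for the dual tuple
    intro p hp
    have hpne : p ≠ 0 := by
      intro h0
      exact hDne 0 (zero_dvd_iff.mp (h0 ▸ hp 0))
    -- p is not divisible by any variable
    have hXndvd : ∀ i, ¬ X i ∣ p := by
      intro i hXi
      obtain ⟨j, s, hs, hsi⟩ := hattain i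
      have htm : eFlip A s ∈ (dualTuple f j).support := by
        rw [hsuppD j]; exact Finset.mem_image_of_mem _ hs
      have := X_dvd_iff'.mp (hXi.trans (hp j)) _ htm
      rw [eFlip_apply, hsi] at this
      omega
    set β : Fin (n + 1) → ℕ := fun i => p.support.sup fun s => s i with hβ
    have hbp : Bnd β p := fun s hs i => Finset.le_sup (f := fun s => s i) hs
    set p' : MvPolynomial (Fin (n + 1)) k := dualForm β p with hp'
    -- p' is not divisible by any variable
    have hp'Xndvd : ∀ i, ¬ X i ∣ p' := by
      intro i hXi
      obtain ⟨s, hs, hse⟩ := Finset.exists_mem_eq_sup p.support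
        (hsupne _ hpne) (fun s => s i)
      have htm : eFlip β s ∈ p'.support := by
        rw [hp', support_dualForm hbp]; exact Finset.mem_image_of_mem _ hs
      have := X_dvd_iff'.mp hXi _ htm
      rw [eFlip_apply] at this
      simp only [hβ, hse] at this
      omega
    -- p' divides every f j
    have hp'dvd : ∀ j, p' ∣ f j := by
      intro j
      obtain ⟨q, hq⟩ := hp j
      set γ : Fin (n + 1) → ℕ := fun i => q.support.sup fun s => s i with hγ
      have hbq : Bnd γ q := fun s hs i => Finset.le_sup (f := fun s => s i) hs
      have hbpq : Bnd (fun i => β i + γ i) (dualTuple f j) := by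
        rw [hq]; exact hbp.mul hbq
      have hkey : dualForm (fun i => β i + γ i) (dualTuple f j) = p' * dualForm γ q := by
        rw [hq]; exact dualForm_mul hbp hbq
      have hfj : dualForm A (dualTuple f j) = f j := by
        rw [hdT j]; exact dualForm_dualForm (hbnd j)
      -- pass to the fraction field
      have hKey2 : (∏ i, X i ^ (β i + γ i)) * f j
          = (∏ i, X i ^ A i) * (p' * dualForm γ q) := by
        apply chi_injective
        rw [map_mul, map_mul, map_prod, map_prod]
        simp only [map_pow]
        rw [← hfj, ← hkey, chi_dualForm (hbndD j), chi_dualForm hbpq]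
        ring
      apply dvd_of_dvd_monomial_mul (fun i => β i + γ i) hp'Xndvd
      rw [hKey2]
      exact ⟨(∏ i, X i ^ A i) * dualForm γ q, by ring⟩
    have hup' : IsUnit p' := hgcd p' hp'dvd
    -- p' is a constant, hence p is a single monomial, hence constant
    have hp'C : p' = C (coeff 0 p') := eq_C_of_isUnit hup'
    have hsuppp' : p'.support ⊆ {0} := by
      intro t ht
      rw [hp'C] at ht
      have hct := mem_support_iff.mp ht
      rw [coeff_C] at hct
      split_ifs at hct with h0
      · exact Finset.mem_singleton.mpr h0.symm
      · exact absurd rfl hct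
    obtain ⟨s₀, hs₀⟩ := hsupne _ hpne
    have hpsupp : p.support ⊆ {s₀} := by
      intro s hs
      have h1 : eFlip β s ∈ p'.support := by
        rw [hp', support_dualForm hbp]; exact Finset.mem_image_of_mem _ hs
      have h2 : eFlip β s₀ ∈ p'.support := by
        rw [hp', support_dualForm hbp]; exact Finset.mem_image_of_mem _ hs₀
      have e1 : eFlip β s = 0 := Finset.mem_singleton.mp (hsuppp' h1)
      have e2 : eFlip β s₀ = 0 := Finset.mem_singleton.mp (hsuppp' h2)
      exact Finset.mem_singleton.mpr (eFlip_inj (hbp s hs) (hbp s₀ hs₀) (e1.trans e2.symm))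
    have hs₀0 : s₀ = 0 := by
      ext i
      have := hXndvd i
      rw [X_dvd_iff'] at this
      push_neg at this
      obtain ⟨s, hs, hsi⟩ := this
      have : s = s₀ := Finset.mem_singleton.mp (hpsupp hs)
      subst this
      simpa using hsi
    have hpC : p = C (coeff 0 p) := eq_C_of_support_subset (hs₀0 ▸ hpsupp)
    have hc0 : coeff 0 p ≠ 0 := by
      rw [← hs₀0]
      exact mem_support_iff.mp hs₀
    rw [hpC]
    exact IsUnit.of_mul_eq_one (C (coeff 0 p)⁻¹)
      (by rw [← C_mul, mul_inv_cancel₀ hc0, C_1])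
  · -- every variable appears in some dual form
    intro i
    obtain ⟨j, s, hs, hsi⟩ := hzero i
    refine ⟨j, eFlip A s, ?_, ?_⟩
    · rw [hsuppD j]; exact Finset.mem_image_of_mem _ hs
    · rw [eFlip_apply, hsi, Nat.sub_zero]
      obtain ⟨j', s', hs', hsi'⟩ := hall i
      have := hbnd j' s' hs' i
      omega
  · -- the dual of the dual is the original tuple
    funext j
    show dualForm (alphaVec (dualTuple f)) (dualTuple f j) = f j
    rw [hAD, hdT j]
    exact dualForm_dualForm (hbnd j)
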